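/- Let (S₁,S₂,I₁,I₂,R₁,R₂,D₁,D₂) be a solution of the two-group active-population SIRD model on [0,∞) with Nᵢ(t) > 0 for all t ≥ 0, with initial data Sᵢ(0) > 0, Iᵢ(0), Rᵢ(0), Dᵢ(0) ≥ 0, and suppose all compartments remain in [0, Ñᵢ] where Ñᵢ = Sᵢ(0)+Iᵢ(0)+Rᵢ(0)+Dᵢ(0). Then I₁(t) → 0 and I₂(t) → 0 as t → ∞; in particular the infectious compartments vanish in the limit. -/

import Mathlib

open Filter Set

lemma aux_barbalat (f g : ℝ → ℝ) (K M μ : ℝ) (hK : 0 < K) (hμ : 0 < μ)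
    (hf' : ∀ t ≥ (0:ℝ), ∃ d, HasDerivAt f d t ∧ |d| ≤ K)
    (hf0 : ∀ t ≥ (0:ℝ), 0 ≤ f t)
    (hg' : ∀ t ≥ (0:ℝ), HasDerivAt g (μ * f t) t)
    (hgM : ∀ t ≥ (0:ℝ), g t ≤ M) :
    Tendsto f atTop (nhds 0) := by
  by_contra hcon
  rw [Metric.tendsto_atTop] at hcon
  push_neg at hcon
  obtain ⟨ε, hε, hfreq⟩ := hcon
  set δ := ε / (2 * K) with hδdef
  have hδ : 0 < δ := by positivity
  have hKδ : K * δ = ε / 2 := by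
    rw [hδdef]; field_simp
  have hsel : ∀ N : ℝ, ∃ t, max N 0 ≤ t ∧ ε ≤ f t := by
    intro N
    obtain ⟨t, ht, hd⟩ := hfreq (max N 0)
    refine ⟨t, ht, ?_⟩
    have ht0 : (0:ℝ) ≤ t := le_trans (le_max_right N 0) ht
    rwa [Real.dist_eq, sub_zero, abs_of_nonneg (hf0 t ht0)] at hd
  have hgmono : MonotoneOn g (Ici (0:ℝ)) := by
    apply monotoneOn_of_deriv_nonneg (convex_Ici 0)
    · intro t ht
      exact (hg' t ht).continuousAt.continuousWithinAt
    · intro t ht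
      rw [interior_Ici] at ht
      exact ((hg' t ht.le).differentiableAt).differentiableWithinAt
    · intro t ht
      rw [interior_Ici] at ht
      rw [(hg' t ht.le).deriv]
      exact mul_nonneg hμ.le (hf0 t ht.le)
  set c := μ * (ε / 2) * δ with hcdef
  have hc : 0 < c := by positivity
  have key : ∀ t, 0 ≤ t → ε ≤ f t → g t + c ≤ g (t + δ) := by
    intro t ht hft
    have htmem : t ∈ Icc t (t + δ) := left_mem_Icc.mpr (by linarith)
    have hflow : ∀ s ∈ Icc t (t + δ), ε / 2 ≤ f s := by
      intro s hs
      have hkmono : MonotoneOn (fun s => f s + K * s) (Icc t (t + δ)) := by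
        apply monotoneOn_of_deriv_nonneg (convex_Icc t (t + δ))
        · intro u hu
          have hu0 : 0 ≤ u := le_trans ht hu.1
          obtain ⟨d, hd, _⟩ := hf' u hu0
          exact ((hd.add ((hasDerivAt_id u).const_mul K)).continuousAt).continuousWithinAt
        · intro u hu
          rw [interior_Icc] at hu
          have hu0 : 0 ≤ u := le_trans ht hu.1.le
          obtain ⟨d, hd, _⟩ := hf' u hu0
          exact ((hd.add ((hasDerivAt_id u).const_mul K)).differentiableAt).differentiableWithinAt
        · intro u hu
          rw [interior_Icc] at hu
          have hu0 : 0 ≤ u := le_trans ht hu.1.le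
          obtain ⟨d, hd, hdK⟩ := hf' u hu0
          have hder : HasDerivAt (fun s => f s + K * s) (d + K * 1) u :=
            hd.add ((hasDerivAt_id u).const_mul K)
          rw [hder.deriv]
          have h2 := (abs_le.mp hdK).1
          linarith
      have h1 : f t + K * t ≤ f s + K * s := hkmono htmem hs hs.1
      have hsle : s ≤ t + δ := hs.2
      nlinarith [hs.1, hs.2]
    have hhmono : MonotoneOn (fun s => g s - μ * (ε / 2) * s) (Icc t (t + δ)) := by
      apply monotoneOn_of_deriv_nonneg (convex_Icc t (t + δ))
      · intro u hu
        have hu0 : 0 ≤ u := le_trans ht hu.1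
        exact (((hg' u hu0).sub ((hasDerivAt_id u).const_mul (μ * (ε / 2)))).continuousAt).continuousWithinAt
      · intro u hu
        rw [interior_Icc] at hu
        have hu0 : 0 ≤ u := le_trans ht hu.1.le
        exact (((hg' u hu0).sub ((hasDerivAt_id u).const_mul (μ * (ε / 2)))).differentiableAt).differentiableWithinAt
      · intro u hu
        rw [interior_Icc] at hu
        have hu0 : 0 ≤ u := le_trans ht hu.1.le
        have hder : HasDerivAt (fun s => g s - μ * (ε / 2) * s) (μ * f u - μ * (ε / 2) * 1) u :=
          (hg' u hu0).sub ((hasDerivAt_id u).const_mul (μ * (ε / 2)))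
        rw [hder.deriv]
        have := hflow u ⟨hu.1.le, hu.2.le⟩
        nlinarith
    have h2 : g t - μ * (ε / 2) * t ≤ g (t + δ) - μ * (ε / 2) * (t + δ) :=
      hhmono htmem (right_mem_Icc.mpr (by linarith)) (by linarith)
    have hexp : μ * (ε / 2) * (t + δ) = μ * (ε / 2) * t + c := by rw [hcdef]; ring
    linarith
  -- build the sequence of bump times
  let T : ℕ → ℝ := fun n => Nat.rec ((hsel 0).choose) (fun _ p => (hsel (p + δ)).choose) n
  have hT0spec : max 0 0 ≤ T 0 ∧ ε ≤ f (T 0) := (hsel 0).choose_spec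
  have hTstep : ∀ n, max (T n + δ) 0 ≤ T (n + 1) ∧ ε ≤ f (T (n + 1)) :=
    fun n => (hsel (T n + δ)).choose_spec
  have hTpos : ∀ n, 0 ≤ T n := by
    intro n
    cases n with
    | zero => simpa using hT0spec.1
    | succ m => exact le_trans (le_max_right _ 0) (hTstep m).1
  have hTf : ∀ n, ε ≤ f (T n) := by
    intro n
    cases n with
    | zero => exact hT0spec.2
    | succ m => exact (hTstep m).2
  have hinv : ∀ n : ℕ, g (T 0) + n * c ≤ g (T n) := by
    intro n
    induction n with
    | zero => simp
    | succ m ih =>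
      have h1 : g (T m) + c ≤ g (T m + δ) := key (T m) (hTpos m) (hTf m)
      have h2 : g (T m + δ) ≤ g (T (m + 1)) := by
        apply hgmono
        · exact mem_Ici.mpr (by linarith [hTpos m])
        · exact mem_Ici.mpr (hTpos (m + 1))
        · exact le_trans (le_max_left _ 0) (hTstep m).1
      push_cast
      linarith
  obtain ⟨n, hn⟩ := exists_nat_gt ((M - g (T 0)) / c)
  have hnc : M - g (T 0) < n * c := by
    rwa [div_lt_iff₀ hc] at hn
  have := hgM (T n) (hTpos n)
  linarith [hinv n]

theorem stmt_2
    (β11 β12 β21 β22 γ1 γ2 μ1 μ2 : ℝ)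
    (hβ11 : 0 < β11) (hβ12 : 0 < β12) (hβ21 : 0 < β21) (hβ22 : 0 < β22)
    (hγ1 : 0 < γ1) (hγ2 : 0 < γ2) (hμ1 : 0 < μ1) (hμ2 : 0 < μ2)
    (S1 S2 I1 I2 R1 R2 D1 D2 N1 N2 : ℝ → ℝ)
    (hN1 : ∀ t, N1 t = S1 t + I1 t + R1 t)
    (hN2 : ∀ t, N2 t = S2 t + I2 t + R2 t)
    (hS1' : ∀ t ≥ (0:ℝ), HasDerivAt S1 (-(β11 * I1 t / N1 t + β12 * I2 t / N2 t) * S1 t) t)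
    (hS2' : ∀ t ≥ (0:ℝ), HasDerivAt S2 (-(β21 * I1 t / N1 t + β22 * I2 t / N2 t) * S2 t) t)
    (hI1' : ∀ t ≥ (0:ℝ), HasDerivAt I1 ((β11 * I1 t / N1 t + β12 * I2 t / N2 t) * S1 t - (γ1 + μ1) * I1 t) t)
    (hI2' : ∀ t ≥ (0:ℝ), HasDerivAt I2 ((β21 * I1 t / N1 t + β22 * I2 t / N2 t) * S2 t - (γ2 + μ2) * I2 t) t)
    (hR1' : ∀ t ≥ (0:ℝ), HasDerivAt R1 (γ1 * I1 t) t)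
    (hR2' : ∀ t ≥ (0:ℝ), HasDerivAt R2 (γ2 * I2 t) t)
    (hD1' : ∀ t ≥ (0:ℝ), HasDerivAt D1 (μ1 * I1 t) t)
    (hD2' : ∀ t ≥ (0:ℝ), HasDerivAt D2 (μ2 * I2 t) t)
    (hN1pos : ∀ t ≥ (0:ℝ), 0 < N1 t)
    (hN2pos : ∀ t ≥ (0:ℝ), 0 < N2 t)
    (hS10 : 0 < S1 0) (hS20 : 0 < S2 0)
    (hI10 : 0 ≤ I1 0) (hI20 : 0 ≤ I2 0)
    (hR10 : 0 ≤ R1 0) (hR20 : 0 ≤ R2 0)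
    (hD10 : 0 ≤ D1 0) (hD20 : 0 ≤ D2 0)
    (hbox1 : ∀ t ≥ (0:ℝ), (0 ≤ S1 t ∧ S1 t ≤ S1 0 + I1 0 + R1 0 + D1 0) ∧
      (0 ≤ I1 t ∧ I1 t ≤ S1 0 + I1 0 + R1 0 + D1 0) ∧
      (0 ≤ R1 t ∧ R1 t ≤ S1 0 + I1 0 + R1 0 + D1 0) ∧
      (0 ≤ D1 t ∧ D1 t ≤ S1 0 + I1 0 + R1 0 + D1 0))
    (hbox2 : ∀ t ≥ (0:ℝ), (0 ≤ S2 t ∧ S2 t ≤ S2 0 + I2 0 + R2 0 + D2 0) ∧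
      (0 ≤ I2 t ∧ I2 t ≤ S2 0 + I2 0 + R2 0 + D2 0) ∧
      (0 ≤ R2 t ∧ R2 t ≤ S2 0 + I2 0 + R2 0 + D2 0) ∧
      (0 ≤ D2 t ∧ D2 t ≤ S2 0 + I2 0 + R2 0 + D2 0))
    :
    Tendsto I1 atTop (nhds 0) ∧ Tendsto I2 atTop (nhds 0) := by
  obtain ⟨M1, hM1def⟩ : ∃ M1 : ℝ, M1 = S1 0 + I1 0 + R1 0 + D1 0 := ⟨_, rfl⟩
  obtain ⟨M2, hM2def⟩ : ∃ M2 : ℝ, M2 = S2 0 + I2 0 + R2 0 + D2 0 := ⟨_, rfl⟩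
  rw [← hM1def] at hbox1
  rw [← hM2def] at hbox2
  have hM1 : 0 < M1 := by rw [hM1def]; linarith
  have hM2 : 0 < M2 := by rw [hM2def]; linarith
  -- force ratios in [0,1]
  have hr1 : ∀ t ≥ (0:ℝ), 0 ≤ I1 t / N1 t ∧ I1 t / N1 t ≤ 1 := by
    intro t ht
    have hb := hbox1 t ht
    have hpos := hN1pos t ht
    constructor
    · exact div_nonneg hb.2.1.1 hpos.le
    · rw [div_le_one hpos, hN1 t]
      linarith [hb.1.1, hb.2.2.1.1]
  have hr2 : ∀ t ≥ (0:ℝ), 0 ≤ I2 t / N2 t ∧ I2 t / N2 t ≤ 1 := by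
    intro t ht
    have hb := hbox2 t ht
    have hpos := hN2pos t ht
    constructor
    · exact div_nonneg hb.2.1.1 hpos.le
    · rw [div_le_one hpos, hN2 t]
      linarith [hb.1.1, hb.2.2.1.1]
  constructor
  · apply aux_barbalat I1 D1 ((β11 + β12 + γ1 + μ1) * M1) M1 μ1 (by positivity) hμ1
    · intro t ht
      refine ⟨_, hI1' t ht, ?_⟩
      have hb := hbox1 t ht
      have h1 := hr1 t ht
      have h2 := hr2 t ht
      have hS : 0 ≤ S1 t ∧ S1 t ≤ M1 := hb.1
      have hI : 0 ≤ I1 t ∧ I1 t ≤ M1 := hb.2.1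
      have ha : β11 * I1 t / N1 t + β12 * I2 t / N2 t ≤ β11 + β12 := by
        rw [mul_div_assoc, mul_div_assoc]
        have e1 : β11 * (I1 t / N1 t) ≤ β11 * 1 := mul_le_mul_of_nonneg_left h1.2 hβ11.le
        have e2 : β12 * (I2 t / N2 t) ≤ β12 * 1 := mul_le_mul_of_nonneg_left h2.2 hβ12.le
        linarith
      have ha0 : 0 ≤ β11 * I1 t / N1 t + β12 * I2 t / N2 t := by
        rw [mul_div_assoc, mul_div_assoc]
        have e1 : 0 ≤ β11 * (I1 t / N1 t) := mul_nonneg hβ11.le h1.1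
        have e2 : 0 ≤ β12 * (I2 t / N2 t) := mul_nonneg hβ12.le h2.1
        linarith
      have hprod : (β11 * I1 t / N1 t + β12 * I2 t / N2 t) * S1 t ≤ (β11 + β12) * M1 :=
        mul_le_mul ha hS.2 hS.1 (by positivity)
      have hprod0 : 0 ≤ (β11 * I1 t / N1 t + β12 * I2 t / N2 t) * S1 t :=
        mul_nonneg ha0 hS.1
      have hq : (γ1 + μ1) * I1 t ≤ (γ1 + μ1) * M1 :=
        mul_le_mul_of_nonneg_left hI.2 (by positivity)
      have hq0 : 0 ≤ (γ1 + μ1) * I1 t := mul_nonneg (by positivity) hI.1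
      have hring : (β11 + β12) * M1 + (γ1 + μ1) * M1 = (β11 + β12 + γ1 + μ1) * M1 := by
        ring
      rw [abs_le]
      constructor <;> linarith
    · intro t ht; exact (hbox1 t ht).2.1.1
    · exact hD1'
    · intro t ht; exact (hbox1 t ht).2.2.2.2
  · apply aux_barbalat I2 D2 ((β21 + β22 + γ2 + μ2) * M2) M2 μ2 (by positivity) hμ2
    · intro t ht
      refine ⟨_, hI2' t ht, ?_⟩
      have hb := hbox2 t ht
      have h1 := hr1 t ht
      have h2 := hr2 t ht
      have hS : 0 ≤ S2 t ∧ S2 t ≤ M2 := hb.1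
      have hI : 0 ≤ I2 t ∧ I2 t ≤ M2 := hb.2.1
      have ha : β21 * I1 t / N1 t + β22 * I2 t / N2 t ≤ β21 + β22 := by
        rw [mul_div_assoc, mul_div_assoc]
        have e1 : β21 * (I1 t / N1 t) ≤ β21 * 1 := mul_le_mul_of_nonneg_left h1.2 hβ21.le
        have e2 : β22 * (I2 t / N2 t) ≤ β22 * 1 := mul_le_mul_of_nonneg_left h2.2 hβ22.le
        linarith
      have ha0 : 0 ≤ β21 * I1 t / N1 t + β22 * I2 t / N2 t := by
        rw [mul_div_assoc, mul_div_assoc]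
        have e1 : 0 ≤ β21 * (I1 t / N1 t) := mul_nonneg hβ21.le h1.1
        have e2 : 0 ≤ β22 * (I2 t / N2 t) := mul_nonneg hβ22.le h2.1
        linarith
      have hprod : (β21 * I1 t / N1 t + β22 * I2 t / N2 t) * S2 t ≤ (β21 + β22) * M2 :=
        mul_le_mul ha hS.2 hS.1 (by positivity)
      have hprod0 : 0 ≤ (β21 * I1 t / N1 t + β22 * I2 t / N2 t) * S2 t :=
        mul_nonneg ha0 hS.1
      have hq : (γ2 + μ2) * I2 t ≤ (γ2 + μ2) * M2 :=
        mul_le_mul_of_nonneg_left hI.2 (by positivity)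
      have hq0 : 0 ≤ (γ2 + μ2) * I2 t := mul_nonneg (by positivity) hI.1
      have hring : (β21 + β22) * M2 + (γ2 + μ2) * M2 = (β21 + β22 + γ2 + μ2) * M2 := by
        ring
      rw [abs_le]
      constructor <;> linarith
    · intro t ht; exact (hbox2 t ht).2.1.1
    · exact hD2'
    · intro t ht; exact (hbox2 t ht).2.2.2.2
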